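/- Let S₀ be semisimple on ℝⁿ·q-periodic sequence space Y_q as above. Then Y_q decomposes as the direct sum Y_q = ξ(U) ⊕ Im(Ŝ₀ − σ), where U = ker(S₀^q − I), and this decomposition is invariant under Â₀, Ŝ₀ and σ. -/

import Mathlib

/-- The space `Y_q` of `q`-periodic sequences in `ℝⁿ`, as a submodule of `ℤ → ℝⁿ`. -/
def perSub (n q : ℕ) : Submodule ℝ (ℤ → (Fin n → ℝ)) where
  carrier := {x | ∀ k : ℤ, x (k + q) = x k}
  add_mem' hx hy := fun k => by simp [hx k, hy k]
  zero_mem' := fun k => rfl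
  smul_mem' c x hx := fun k => by simp [hx k]

/-- The map `ξ(u) = (S₀^i u)_{i ∈ ℤ}` as a linear map into the space of sequences. -/
noncomputable def xiMap {n : ℕ} (S : (Fin n → ℝ) ≃ₗ[ℝ] (Fin n → ℝ)) :
    (Fin n → ℝ) →ₗ[ℝ] (ℤ → (Fin n → ℝ)) where
  toFun u := fun i => (S ^ i) u
  map_add' x y := by funext i; simp
  map_smul' c x := by funext i; simp

open Polynomial

namespace YqAux

variable {n q : ℕ} (S : (Fin n → ℝ) ≃ₗ[ℝ] (Fin n → ℝ))

theorem kerinf {K V : Type*} [Field K] [AddCommGroup V] [Module K V] [FiniteDimensional K V]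
    (f : V →ₗ[K] V) (hsq : Squarefree (minpoly K f)) :
    LinearMap.ker f ⊓ LinearMap.range f = ⊥ := by
  rw [Submodule.eq_bot_iff]
  rintro v ⟨hk, w, rfl⟩
  replace hk : f (f w) = 0 := hk
  set m := minpoly K f with hm
  by_cases hX : X ∣ m
  · obtain ⟨r, hr⟩ := hX
    have hXr : ¬ X ∣ r := fun ⟨s, hs⟩ => Polynomial.not_isUnit_X (R := K)
      (hsq X ⟨s, by rw [hr, hs]; ring⟩)
    obtain ⟨a, b, hab⟩ := ((Polynomial.irreducible_X (R := K)).coprime_iff_not_dvd).2 hXr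
    have := congrArg (fun p => (aeval f p) (f w)) hab
    simp only [map_add, map_mul, map_one, Module.End.one_apply, LinearMap.add_apply,
      Module.End.mul_apply, aeval_X] at this
    rw [hk] at this
    have h2 : (aeval f r) (f w) = 0 := by
      have hc : (aeval f r) * f = aeval f m := by
        rw [hr, mul_comm X r, map_mul, aeval_X]
      have : (aeval f r) (f w) = (aeval f m) w := by
        calc (aeval f r) (f w) = ((aeval f r) * f) w := rfl
          _ = (aeval f m) w := by rw [hc]
      rw [this, hm, minpoly.aeval]; simp
    rw [h2] at this
    simpa using this.symm
  · obtain ⟨a, b, hab⟩ := ((Polynomial.irreducible_X (R := K)).coprime_iff_not_dvd).2 hX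
    have := congrArg (fun p => (aeval f p) (f w)) hab
    simp only [map_add, map_mul, map_one, Module.End.one_apply, LinearMap.add_apply,
      Module.End.mul_apply, aeval_X] at this
    rw [hk, hm, minpoly.aeval] at this
    simpa using this.symm

theorem zpow_nat_apply (m : ℕ) (v : Fin n → ℝ) :
    (S ^ (m : ℤ)) v = ((S : (Fin n → ℝ) →ₗ[ℝ] (Fin n → ℝ)) ^ m) v := by
  rw [zpow_natCast, LinearEquiv.pow_apply, Module.End.pow_apply]; rfl

theorem zpow_add_apply (a b : ℤ) (v : Fin n → ℝ) :
    (S ^ (a + b)) v = (S ^ a) ((S ^ b) v) := by rw [zpow_add]; rfl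

/-- `Φ(x) = ∑_{k<q} S^{-k} x(k)`. -/
noncomputable def Phi (q : ℕ) : (ℤ → (Fin n → ℝ)) →ₗ[ℝ] (Fin n → ℝ) :=
  ∑ k ∈ Finset.range q, ((S ^ (-(k:ℤ))).toLinearMap ∘ₗ LinearMap.proj (k : ℤ))

theorem Phi_apply (x : ℤ → (Fin n → ℝ)) :
    Phi S q x = ∑ k ∈ Finset.range q, (S ^ (-(k:ℤ))) (x k) := by
  simp [Phi, LinearMap.sum_apply]

theorem Phi_xi (u : Fin n → ℝ) : Phi S q (xiMap S u) = (q : ℝ) • u := by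
  rw [Phi_apply]
  have : ∀ k ∈ Finset.range q, (S ^ (-(k:ℤ))) ((xiMap S u) k) = u := by
    intro k _
    show (S ^ (-(k:ℤ))) ((S ^ (k:ℤ)) u) = u
    rw [← zpow_add_apply, neg_add_cancel]; rfl
  rw [Finset.sum_congr rfl this, Finset.sum_const, Finset.card_range,
    ← Nat.cast_smul_eq_nsmul ℝ]

section per
variable {x : ℤ → (Fin n → ℝ)} (hx : ∀ k : ℤ, x (k + q) = x k)
include hx

theorem per_add_mul (k : ℤ) : ∀ m : ℤ, x (k + q * m) = x k := by
  intro m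
  induction m using Int.induction_on with
  | zero => simp
  | succ i ih => rw [show k + q * (i+1) = (k + q * i) + q by ring, hx, ih]
  | pred i ih =>
      have h2 := hx (k + q * (-(i:ℤ)) - q)
      rw [sub_add_cancel] at h2
      rw [show k + (q:ℤ) * (-(i:ℤ)-1) = k + q * (-(i:ℤ)) - q by ring, ← h2, ih]

theorem per_emod (hq : 0 < q) (k : ℤ) : x k = x (k % q) := by
  conv_lhs => rw [← Int.emod_add_mul_ediv k q]
  rw [per_add_mul hx]

end per

/-- `x ↦ (x 0, …, x (q-1))`, injective on `perSub`. -/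
theorem restr_inj (hq : 0 < q) {x : ℤ → (Fin n → ℝ)} (hx : x ∈ perSub n q)
    (h0 : ∀ j : Fin q, x (j : ℤ) = 0) : x = 0 := by
  funext k
  have hk := per_emod (q := q) hx hq k
  have h1 : (0:ℤ) ≤ k % q := Int.emod_nonneg k (by exact_mod_cast hq.ne')
  have h2 : k % q < q := Int.emod_lt_of_pos k (by exact_mod_cast hq)
  have := h0 ⟨(k % q).toNat, by omega⟩
  simp only [Fin.val_mk] at this
  rw [show ((( k % (q:ℤ)).toNat : ℤ)) = k % q by omega] at this
  rw [hk, this]; simp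


local notation "Sl" => (S : (Fin n → ℝ) →ₗ[ℝ] (Fin n → ℝ))

theorem pow_nat_apply' (m : ℕ) (v : Fin n → ℝ) :
    (Sl ^ m) v = (S ^ (m : ℤ)) v := (zpow_nat_apply S m v).symm

theorem xi_mem_perSub {u : Fin n → ℝ} (hu : (Sl ^ q - 1) u = 0) :
    xiMap S u ∈ perSub n q := by
  intro k
  show (S ^ (k + (q:ℤ))) u = (S ^ k) u
  rw [zpow_add_apply, zpow_nat_apply]
  have : (Sl ^ q) u = u := by
    have := hu; rw [LinearMap.sub_apply, Module.End.one_apply, sub_eq_zero] at this; exact this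
  rw [this]

/-- The operator `T = Ŝ − σ`. -/
noncomputable def Tmap : (ℤ → (Fin n → ℝ)) →ₗ[ℝ] (ℤ → (Fin n → ℝ)) :=
  LinearMap.compLeft Sl ℤ - LinearMap.funLeft ℝ (Fin n → ℝ) (fun i => i + 1)

theorem T_apply (x : ℤ → (Fin n → ℝ)) (k : ℤ) :
    Tmap S x k = Sl (x k) - x (k + 1) := rfl

theorem T_mem_perSub {x : ℤ → (Fin n → ℝ)} (hx : x ∈ perSub n q) :
    Tmap S x ∈ perSub n q := by
  intro k
  rw [T_apply, T_apply, hx k, show k + (q:ℤ) + 1 = (k+1) + q by ring, hx (k+1)]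

theorem T_xi (u : Fin n → ℝ) :
    Tmap S (xiMap S u) = 0 := by
  funext k
  rw [T_apply]
  show Sl ((S ^ k) u) - (S ^ (k+1)) u = 0
  rw [show Sl ((S ^ k) u) = S ((S ^ k) u) from rfl, show k + 1 = 1 + k by ring,
    zpow_add_apply, zpow_one, sub_self]

theorem Phi_T {x : ℤ → (Fin n → ℝ)} (hx : x ∈ perSub n q) :
    Phi S q (Tmap S x) = (S ^ (1 - (q:ℤ))) ((Sl ^ q - 1) (x 0)) := by
  rw [Phi_apply]
  have key : ∀ k ∈ Finset.range q,
      (S ^ (-(k:ℤ))) (Tmap S x k)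
        = (fun j : ℕ => (S ^ (1 - (j:ℤ))) (x j)) k
          - (fun j : ℕ => (S ^ (1 - (j:ℤ))) (x j)) (k+1) := by
    intro k _
    rw [T_apply, map_sub]
    congr 1
    · show (S ^ (-(k:ℤ))) (Sl (x k)) = (S ^ (1 - (k:ℤ))) (x k)
      rw [show (1 - (k:ℤ)) = -(k:ℤ) + 1 by ring, zpow_add_apply, zpow_one]; rfl
    · show (S ^ (-(k:ℤ))) (x ((k:ℤ)+1)) = (S ^ (1 - ((k+1:ℕ):ℤ))) (x (((k+1:ℕ)):ℤ))
      rw [show (1 - ((k+1:ℕ):ℤ)) = -(k:ℤ) by push_cast; ring,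
        show (((k+1:ℕ)):ℤ) = (k:ℤ)+1 by push_cast; ring]
  rw [Finset.sum_congr rfl key, Finset.sum_range_sub']
  have hxq : x ((q:ℕ):ℤ) = x 0 := by have := hx 0; rwa [zero_add] at this
  simp only [Nat.cast_zero, hxq]
  rw [LinearMap.sub_apply, Module.End.one_apply, map_sub, pow_nat_apply',
    ← zpow_add_apply, show (1:ℤ) - (q:ℤ) + q = 1 - 0 by ring]

theorem zpow_comm_pow (m : ℤ) (v : Fin n → ℝ) :
    (S ^ m) ((Sl ^ q) v) = (Sl ^ q) ((S ^ m) v) := by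
  rw [pow_nat_apply', pow_nat_apply', ← zpow_add_apply, ← zpow_add_apply, add_comm]

theorem zpow_g_mem_range (m : ℤ) (v : Fin n → ℝ) :
    (S ^ m) ((Sl ^ q - 1) v) ∈ LinearMap.range (Sl ^ q - 1) := by
  refine ⟨(S ^ m) v, ?_⟩
  rw [LinearMap.sub_apply, LinearMap.sub_apply, Module.End.one_apply, Module.End.one_apply,
    map_sub, zpow_comm_pow]

theorem comm_zpow {B : (Fin n → ℝ) →ₗ[ℝ] (Fin n → ℝ)} (hB : ∀ v, B (S v) = S (B v)) :
    ∀ (k : ℤ) (v : Fin n → ℝ), B ((S ^ k) v) = (S ^ k) (B v) := by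
  intro k
  induction k using Int.induction_on with
  | zero => intro v; rfl
  | succ i ih =>
      intro v
      rw [show (i:ℤ) + 1 = 1 + i by ring, zpow_add_apply, zpow_one, hB, ih,
        zpow_add_apply, zpow_one]
  | pred i ih =>
      intro v
      apply S.injective
      rw [← hB, show S ((S ^ (-(i:ℤ)-1)) v) = (S ^ (1 + (-(i:ℤ)-1))) v by
        rw [zpow_add_apply, zpow_one], show (1 + (-(i:ℤ)-1)) = -(i:ℤ) by ring, ih,
        show S ((S ^ (-(i:ℤ)-1)) (B v)) = (S ^ (1 + (-(i:ℤ)-1))) (B v) by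
        rw [zpow_add_apply, zpow_one], show (1 + (-(i:ℤ)-1)) = -(i:ℤ) by ring]

theorem ker_T_eq_xi {x : ℤ → (Fin n → ℝ)} (hx : x ∈ perSub n q)
    (hT : ∀ k : ℤ, Sl (x k) - x (k + 1) = 0) :
    x = xiMap S (x 0) ∧ (Sl ^ q - 1) (x 0) = 0 := by
  have hstep : ∀ k : ℤ, x (k + 1) = S (x k) := by
    intro k; have := hT k; rw [sub_eq_zero] at this; exact this.symm
  have hform : ∀ k : ℤ, x k = (S ^ k) (x 0) := by
    intro k
    induction k using Int.induction_on with
    | zero => rfl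
    | succ i ih => rw [hstep i, ih, show (i:ℤ) + 1 = 1 + i by ring, zpow_add_apply, zpow_one]
    | pred i ih =>
        apply S.injective
        rw [← hstep (-(i:ℤ) - 1), sub_add_cancel, ih,
          show S ((S ^ (-(i:ℤ)-1)) (x 0)) = (S ^ (1 + (-(i:ℤ)-1))) (x 0) by
            rw [zpow_add_apply, zpow_one], show (1 + (-(i:ℤ)-1)) = -(i:ℤ) by ring]
  constructor
  · funext k; exact hform k
  · have h1 : x ((q:ℕ):ℤ) = x 0 := by have := hx 0; rwa [zero_add] at this
    have h2 : x ((q:ℕ):ℤ) = (S ^ ((q:ℕ):ℤ)) (x 0) := hform q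
    rw [LinearMap.sub_apply, Module.End.one_apply, pow_nat_apply', ← h2, h1, sub_self]


theorem comm_pow_nat {B : (Fin n → ℝ) →ₗ[ℝ] (Fin n → ℝ)} (hB : ∀ v, B (Sl v) = Sl (B v))
    (m : ℕ) : ∀ v, B ((Sl ^ m) v) = (Sl ^ m) (B v) := by
  induction m with
  | zero => intro v; rfl
  | succ i ih =>
      intro v
      simp only [pow_succ', Module.End.mul_apply]
      rw [hB, ih]

theorem ker_g_stable {B : (Fin n → ℝ) →ₗ[ℝ] (Fin n → ℝ)} (hB : ∀ v, B (Sl v) = Sl (B v))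
    {u : Fin n → ℝ} (hu : (Sl ^ q - 1) u = 0) : (Sl ^ q - 1) (B u) = 0 := by
  rw [LinearMap.sub_apply, Module.End.one_apply, sub_eq_zero] at hu ⊢
  rw [← comm_pow_nat S hB, hu]

theorem map_xi_of_comm {B : (Fin n → ℝ) →ₗ[ℝ] (Fin n → ℝ)} (hB : ∀ v, B (S v) = S (B v))
    (u : Fin n → ℝ) : LinearMap.compLeft B ℤ (xiMap S u) = xiMap S (B u) :=
  funext fun k => comm_zpow S hB k u

theorem sigma_xi (u : Fin n → ℝ) :
    LinearMap.funLeft ℝ (Fin n → ℝ) (fun i : ℤ => i + 1) (xiMap S u) = xiMap S (S u) :=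
  funext fun k => by
    show (S ^ (k + 1)) u = (S ^ k) (S u)
    rw [zpow_add_apply, zpow_one]

theorem compLeft_mem_perSub {B : (Fin n → ℝ) →ₗ[ℝ] (Fin n → ℝ)} {y : ℤ → Fin n → ℝ}
    (hy : y ∈ perSub n q) : LinearMap.compLeft B ℤ y ∈ perSub n q := fun k => by
  show B (y (k + q)) = B (y k); rw [hy k]

theorem sigma_mem_perSub {y : ℤ → Fin n → ℝ} (hy : y ∈ perSub n q) :
    LinearMap.funLeft ℝ (Fin n → ℝ) (fun i : ℤ => i + 1) y ∈ perSub n q := fun k => by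
  show y (k + q + 1) = y (k + 1)
  rw [show k + (q:ℤ) + 1 = (k+1) + q by ring, hy (k+1)]

theorem compLeft_Tmap {B : (Fin n → ℝ) →ₗ[ℝ] (Fin n → ℝ)} (hB : ∀ v, B (Sl v) = Sl (B v))
    (y : ℤ → Fin n → ℝ) :
    LinearMap.compLeft B ℤ (Tmap S y) = Tmap S (LinearMap.compLeft B ℤ y) :=
  funext fun k => by
    show B (Sl (y k) - y (k+1)) = Sl (B (y k)) - B (y (k+1))
    rw [map_sub, hB]

theorem sigma_Tmap (y : ℤ → Fin n → ℝ) :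
    LinearMap.funLeft ℝ (Fin n → ℝ) (fun i : ℤ => i + 1) (Tmap S y)
      = Tmap S (LinearMap.funLeft ℝ (Fin n → ℝ) (fun i : ℤ => i + 1) y) :=
  funext fun k => rfl

end YqAux


/-- `Y_q = ξ(U) ⊕ Im(Ŝ₀ − σ)` where `U = ker(S₀^q − I)`, and this decomposition is
invariant under `Â₀`, `Ŝ₀` and `σ`. -/
theorem Yq_decomposition {n q : ℕ} (hq : 0 < q)
    (S : (Fin n → ℝ) ≃ₗ[ℝ] (Fin n → ℝ)) (N : (Fin n → ℝ) →ₗ[ℝ] (Fin n → ℝ))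
    (hS : Module.End.IsSemisimple (S : (Fin n → ℝ) →ₗ[ℝ] (Fin n → ℝ)))
    (hN : IsNilpotent N)
    (hcomm : Commute (S : (Fin n → ℝ) →ₗ[ℝ] (Fin n → ℝ)) N)
    (hinv : Function.Bijective ((S : (Fin n → ℝ) →ₗ[ℝ] (Fin n → ℝ)) + N)) :
    -- notation
    ∀ (Sl : (Fin n → ℝ) →ₗ[ℝ] (Fin n → ℝ)), Sl = (S : (Fin n → ℝ) →ₗ[ℝ] (Fin n → ℝ)) →
    ∀ (σl Shat Ahat T : (ℤ → (Fin n → ℝ)) →ₗ[ℝ] (ℤ → (Fin n → ℝ))),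
      σl = LinearMap.funLeft ℝ (Fin n → ℝ) (fun i => i + 1) →
      Shat = Sl.compLeft ℤ →
      Ahat = (Sl + N).compLeft ℤ →
      T = Shat - σl →
    ∀ (U : Submodule ℝ (Fin n → ℝ)), U = LinearMap.ker (Sl ^ q - 1) →
    ∀ (W I : Submodule ℝ (ℤ → (Fin n → ℝ))),
      W = Submodule.map (xiMap S) U →
      I = Submodule.map T (perSub n q) →
    -- the direct sum decomposition of Y_q
    (W ⊓ I = ⊥ ∧ W ⊔ I = perSub n q) ∧
    -- invariance under Â₀, Ŝ₀ and σ
    (Submodule.map Ahat W ≤ W ∧ Submodule.map Ahat I ≤ I ∧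
     Submodule.map Shat W ≤ W ∧ Submodule.map Shat I ≤ I ∧
     Submodule.map σl W ≤ W ∧ Submodule.map σl I ≤ I) := by
  intro Sl hSl σl Shat Ahat T hσ hSh hAh hT U hU W I hW hI
  subst hT hAh hSh hσ hSl hU hW hI
  -- basic abbreviations / facts
  have hTm : (LinearMap.compLeft (S : (Fin n → ℝ) →ₗ[ℝ] (Fin n → ℝ)) ℤ
      - LinearMap.funLeft ℝ (Fin n → ℝ) (fun i => i + 1)) = YqAux.Tmap S := rfl
  set g : (Fin n → ℝ) →ₗ[ℝ] (Fin n → ℝ) := (S : (Fin n → ℝ) →ₗ[ℝ] (Fin n → ℝ)) ^ q - 1 with hg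
  have hgss : Module.End.IsSemisimple g :=
    hS.of_mem_adjoin_singleton
      (Subalgebra.sub_mem _ (pow_mem (Algebra.self_mem_adjoin_singleton _ _) _)
        (Subalgebra.one_mem _))
  have hker : LinearMap.ker g ⊓ LinearMap.range g = ⊥ :=
    YqAux.kerinf g hgss.minpoly_squarefree
  have hq' : (q : ℝ) ≠ 0 := Nat.cast_ne_zero.mpr hq.ne'
  -- W and I are inside Y
  have hWle : Submodule.map (xiMap S) (LinearMap.ker g) ≤ perSub n q := by
    rintro x ⟨u, hu, rfl⟩
    exact YqAux.xi_mem_perSub S hu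
  have hIle : Submodule.map (YqAux.Tmap S) (perSub n q) ≤ perSub n q := by
    rintro x ⟨y, hy, rfl⟩
    exact YqAux.T_mem_perSub S hy
  -- W ⊓ I = ⊥
  have hWI : Submodule.map (xiMap S) (LinearMap.ker g)
      ⊓ Submodule.map (YqAux.Tmap S) (perSub n q) = ⊥ := by
    rw [Submodule.eq_bot_iff]
    rintro x ⟨⟨u, hu, rfl⟩, ⟨y, hy, hTy⟩⟩
    replace hu : g u = 0 := hu
    have h1 : YqAux.Phi S q (xiMap S u) = (q : ℝ) • u := YqAux.Phi_xi S u
    have h2 : YqAux.Phi S q (xiMap S u) ∈ LinearMap.range g := by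
      rw [← hTy, YqAux.Phi_T S hy]
      exact YqAux.zpow_g_mem_range S _ _
    rw [h1] at h2
    have h3 : (q : ℝ) • u ∈ LinearMap.ker g := by
      rw [LinearMap.mem_ker, map_smul, hu, smul_zero]
    have h4 : (q : ℝ) • u = 0 := by
      have := hker ▸ (Submodule.mem_inf.mpr ⟨h3, h2⟩)
      simpa using this
    have hu0 : u = 0 := by
      rcases smul_eq_zero.mp h4 with h | h
      · exact absurd h hq'
      · exact h
    rw [hu0, map_zero]
  -- finite dimensionality of Y
  haveI hYfd : FiniteDimensional ℝ (perSub n q) := by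
    refine FiniteDimensional.of_injective
      ((LinearMap.funLeft ℝ (Fin n → ℝ) (fun j : Fin q => (j : ℤ))).comp
        (perSub n q).subtype) ?_
    intro a b hab
    have hz : ((a - b : perSub n q) : ℤ → Fin n → ℝ) = 0 := by
      refine YqAux.restr_inj hq (a - b).2 ?_
      intro j
      have := congrFun hab j
      simp only [LinearMap.comp_apply, LinearMap.funLeft_apply, Submodule.coe_subtype] at this
      show ((a : ℤ → Fin n → ℝ) - (b : ℤ → Fin n → ℝ)) ((j : ℤ)) = 0
      simp [this]
    have : a - b = 0 := Subtype.ext hz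
    exact sub_eq_zero.mp this
  -- restriction of T to Y
  set T' : perSub n q →ₗ[ℝ] perSub n q :=
    (YqAux.Tmap S).restrict (fun x hx => YqAux.T_mem_perSub S hx) with hT'
  have hI_eq : Submodule.map (YqAux.Tmap S) (perSub n q)
      = Submodule.map (perSub n q).subtype (LinearMap.range T') := by
    ext x
    constructor
    · rintro ⟨y, hy, rfl⟩
      exact ⟨T' ⟨y, hy⟩, ⟨⟨y, hy⟩, rfl⟩, rfl⟩
    · rintro ⟨z, ⟨w, rfl⟩, rfl⟩
      exact ⟨w, w.2, rfl⟩
  have hW_eq : Submodule.map (xiMap S) (LinearMap.ker g)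
      = Submodule.map (perSub n q).subtype (LinearMap.ker T') := by
    ext x
    constructor
    · rintro ⟨u, hu, rfl⟩
      replace hu : g u = 0 := hu
      refine ⟨⟨xiMap S u, YqAux.xi_mem_perSub S hu⟩, LinearMap.mem_ker.mpr ?_, rfl⟩
      apply Subtype.ext
      show YqAux.Tmap S (xiMap S u) = 0
      exact YqAux.T_xi S u
    · rintro ⟨⟨x, hxY⟩, hxk, rfl⟩
      replace hxk : T' ⟨x, hxY⟩ = 0 := hxk
      have hxk' : YqAux.Tmap S x = 0 := congrArg Subtype.val hxk
      have hk : ∀ k : ℤ, (S : (Fin n → ℝ) →ₗ[ℝ] (Fin n → ℝ)) (x k) - x (k + 1) = 0 :=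
        fun k => congrFun hxk' k
      obtain ⟨hform, hU0⟩ := YqAux.ker_T_eq_xi S hxY hk
      exact ⟨x 0, LinearMap.mem_ker.mpr hU0, hform.symm⟩
  haveI : FiniteDimensional ℝ (Submodule.map (xiMap S) (LinearMap.ker g)) :=
    Submodule.finiteDimensional_of_le hWle
  haveI : FiniteDimensional ℝ (Submodule.map (YqAux.Tmap S) (perSub n q)) :=
    Submodule.finiteDimensional_of_le hIle
  have e1 : Module.finrank ℝ (Submodule.map (xiMap S) (LinearMap.ker g))
      = Module.finrank ℝ (LinearMap.ker T') := by
    rw [hW_eq, Submodule.finrank_map_subtype_eq]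
  have e2 : Module.finrank ℝ (Submodule.map (YqAux.Tmap S) (perSub n q))
      = Module.finrank ℝ (LinearMap.range T') := by
    rw [hI_eq, Submodule.finrank_map_subtype_eq]
  have e3 := LinearMap.finrank_range_add_finrank_ker T'
  have e4 := Submodule.finrank_sup_add_finrank_inf_eq
    (Submodule.map (xiMap S) (LinearMap.ker g)) (Submodule.map (YqAux.Tmap S) (perSub n q))
  rw [hWI, finrank_bot, add_zero] at e4
  have hsup : Submodule.map (xiMap S) (LinearMap.ker g)
      ⊔ Submodule.map (YqAux.Tmap S) (perSub n q) = perSub n q := by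
    refine Submodule.eq_of_le_of_finrank_le (sup_le hWle hIle) ?_
    rw [e4, e1, e2]
    omega
  refine ⟨⟨?_, ?_⟩, ?_, ?_, ?_, ?_, ?_, ?_⟩
  · exact hTm ▸ hWI
  · exact hTm ▸ hsup
  -- invariance of W under Ahat
  · rintro _ ⟨x, ⟨u, hu, rfl⟩, rfl⟩
    have hB : ∀ v, ((S : (Fin n → ℝ) →ₗ[ℝ] (Fin n → ℝ)) + N) (S v)
        = S (((S : (Fin n → ℝ) →ₗ[ℝ] (Fin n → ℝ)) + N) v) := by
      intro v
      have hNS : N (S v) = S (N v) := congrFun (congrArg DFunLike.coe hcomm.symm) v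
      show (S : (Fin n → ℝ) →ₗ[ℝ] (Fin n → ℝ)) (S v) + N (S v)
        = S ((S : (Fin n → ℝ) →ₗ[ℝ] (Fin n → ℝ)) v + N v)
      rw [map_add, hNS]
      rfl
    refine ⟨((S : (Fin n → ℝ) →ₗ[ℝ] (Fin n → ℝ)) + N) u, LinearMap.mem_ker.mpr ?_, ?_⟩
    · exact YqAux.ker_g_stable S (fun v => hB v) hu
    · exact (YqAux.map_xi_of_comm S hB u).symm
  -- invariance of I under Ahat
  · rintro _ ⟨x, ⟨y, hy, rfl⟩, rfl⟩
    have hB : ∀ v, ((S : (Fin n → ℝ) →ₗ[ℝ] (Fin n → ℝ)) + N) (S v)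
        = S (((S : (Fin n → ℝ) →ₗ[ℝ] (Fin n → ℝ)) + N) v) := by
      intro v
      have hNS : N (S v) = S (N v) := congrFun (congrArg DFunLike.coe hcomm.symm) v
      show (S : (Fin n → ℝ) →ₗ[ℝ] (Fin n → ℝ)) (S v) + N (S v)
        = S ((S : (Fin n → ℝ) →ₗ[ℝ] (Fin n → ℝ)) v + N v)
      rw [map_add, hNS]
      rfl
    refine ⟨LinearMap.compLeft ((S : (Fin n → ℝ) →ₗ[ℝ] (Fin n → ℝ)) + N) ℤ y,
      YqAux.compLeft_mem_perSub hy, ?_⟩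
    rw [hTm]
    exact (YqAux.compLeft_Tmap S hB y).symm
  -- invariance of W under Shat
  · rintro _ ⟨x, ⟨u, hu, rfl⟩, rfl⟩
    refine ⟨(S : (Fin n → ℝ) →ₗ[ℝ] (Fin n → ℝ)) u, LinearMap.mem_ker.mpr ?_, ?_⟩
    · exact YqAux.ker_g_stable S (fun v => rfl) hu
    · exact (YqAux.map_xi_of_comm S (fun v => rfl) u).symm
  -- invariance of I under Shat
  · rintro _ ⟨x, ⟨y, hy, rfl⟩, rfl⟩
    refine ⟨LinearMap.compLeft (S : (Fin n → ℝ) →ₗ[ℝ] (Fin n → ℝ)) ℤ y,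
      YqAux.compLeft_mem_perSub hy, ?_⟩
    rw [hTm]
    exact (YqAux.compLeft_Tmap S (fun v => rfl) y).symm
  -- invariance of W under σ
  · rintro _ ⟨x, ⟨u, hu, rfl⟩, rfl⟩
    refine ⟨(S : (Fin n → ℝ) →ₗ[ℝ] (Fin n → ℝ)) u, LinearMap.mem_ker.mpr ?_, ?_⟩
    · exact YqAux.ker_g_stable S (fun v => rfl) hu
    · exact (YqAux.sigma_xi S u).symm
  -- invariance of I under σ
  · rintro _ ⟨x, ⟨y, hy, rfl⟩, rfl⟩
    refine ⟨LinearMap.funLeft ℝ (Fin n → ℝ) (fun i : ℤ => i + 1) y,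
      YqAux.sigma_mem_perSub hy, ?_⟩
    rw [hTm]
    exact (YqAux.sigma_Tmap S y).symm
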